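/- Let f: ℝ → ℝ be C-quasi-self-concordant and A ∈ ℝ^{n×d}. Define h(x) = Σᵢ f((Ax)ᵢ). Then for any x, y ∈ ℝ^d with ‖Ax − Ay‖_∞ ≤ r, the Hessians satisfy (1/e^{Cr})·∇²h(x) ⪯ ∇²h(y) ⪯ e^{Cr}·∇²h(x) in the Loewner order. -/

import Mathlib

open Matrix

/-- Grönwall-type bound on an ordered interval. -/
lemma qsc_gron_ordered {C : ℝ} (hC : 0 ≤ C) {g g' : ℝ → ℝ}
    (hg : ∀ u, HasDerivAt g (g' u) u) (hd : ∀ u, |g' u| ≤ C * g u)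
    (hpos : ∀ u, 0 ≤ g u) {s t : ℝ} (hst : s ≤ t) :
    g t ≤ g s * Real.exp (C * (t - s)) := by
  have hcont : ContinuousOn g (Set.Icc s t) :=
    (fun u _ => (hg u).continuousAt.continuousWithinAt)
  have key := norm_le_gronwallBound_of_norm_deriv_right_le (f := g) (f' := g')
    (δ := g s) (K := C) (ε := 0) (a := s) (b := t) hcont
    (fun u _ => (hg u).hasDerivWithinAt)
    (by simp [Real.norm_eq_abs, abs_of_nonneg (hpos s)])
    (fun u _ => by
      simpa [Real.norm_eq_abs, abs_of_nonneg (hpos u)] using hd u)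
    t ⟨hst, le_refl t⟩
  rw [gronwallBound_ε0] at key
  calc g t ≤ |g t| := le_abs_self _
    _ ≤ g s * Real.exp (C * (t - s)) := key

/-- Two-sided Grönwall bound: if `|g'| ≤ C g` then `g t ≤ g s * e^{C r}` whenever `|t - s| ≤ r`. -/
lemma qsc_gron {C r : ℝ} (hC : 0 ≤ C) (hr : 0 ≤ r) {g g' : ℝ → ℝ}
    (hg : ∀ u, HasDerivAt g (g' u) u) (hd : ∀ u, |g' u| ≤ C * g u)
    {s t : ℝ} (hst : |t - s| ≤ r) :
    g t ≤ g s * Real.exp (C * r) := by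
  rcases eq_or_lt_of_le hC with hC0 | hCpos
  · -- C = 0 : g is constant
    have hz : ∀ u, deriv g u = 0 := fun u => by
      have := hd u
      rw [← hC0, zero_mul] at this
      have : |g' u| = 0 := le_antisymm this (abs_nonneg _)
      rw [(hg u).deriv]
      exact abs_eq_zero.mp this
    have hconst := is_const_of_deriv_eq_zero (fun u => (hg u).differentiableAt) hz t s
    rw [hconst, ← hC0, zero_mul, Real.exp_zero, mul_one]
  · have hpos : ∀ u, 0 ≤ g u := fun u => by
      have h0 : 0 ≤ C * g u := le_trans (abs_nonneg _) (hd u)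
      exact nonneg_of_mul_nonneg_right h0 hCpos
    have hmono : Real.exp (C * |t - s|) ≤ Real.exp (C * r) :=
      Real.exp_le_exp.mpr (mul_le_mul_of_nonneg_left hst hC)
    rcases le_total s t with h | h
    · have := qsc_gron_ordered hC hg hd hpos h
      rw [abs_of_nonneg (sub_nonneg.mpr h)] at hmono
      exact this.trans (mul_le_mul_of_nonneg_left hmono (hpos s))
    · -- reflect
      set h' : ℝ → ℝ := fun u => g (s + t - u) with hh'
      have hrefl : ∀ u, HasDerivAt (fun u => g (s + t - u)) (g' (s + t - u) * (-1)) u :=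
        fun u => (hg (s + t - u)).comp u ((hasDerivAt_id u).const_sub (s + t))
      have key := qsc_gron_ordered hC hrefl
        (fun u => by simpa [abs_mul] using hd (s + t - u))
        (fun u => hpos _) (s := t) (t := s) h
      simp only [add_sub_cancel_right, add_sub_cancel_left] at key
      rw [abs_of_nonpos (sub_nonpos.mpr h), neg_sub] at hmono
      exact key.trans (mul_le_mul_of_nonneg_left hmono (hpos s))

/-- Hessian stability in the ℓ∞ norm for `h x = ∑ i, f ((A x)_i)` with `f` C-QSC:
if `‖Ax - Ay‖_∞ ≤ r` then `e^{-Cr} ∇²h(x) ⪯ ∇²h(y) ⪯ e^{Cr} ∇²h(x)`. -/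
theorem qsc_hessian_stability {n d : ℕ} (C r : ℝ) (hC : 0 ≤ C) (hr : 0 ≤ r)
    (f : ℝ → ℝ) (hf : ContDiff ℝ 3 f) (hconv : ConvexOn ℝ Set.univ f)
    (hqsc : ∀ t : ℝ, |iteratedDeriv 3 f t| ≤ C * iteratedDeriv 2 f t)
    (A : Matrix (Fin n) (Fin d) ℝ) (x y : Fin d → ℝ)
    (hxy : ‖A.mulVec x - A.mulVec y‖ ≤ r)
    (H : (Fin d → ℝ) → Matrix (Fin d) (Fin d) ℝ)
    (hH : ∀ z, H z = Aᵀ * Matrix.diagonal (fun i => iteratedDeriv 2 f (A.mulVec z i)) * A) :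
    (H y - (Real.exp (C * r))⁻¹ • H x).PosSemidef ∧
    (Real.exp (C * r) • H x - H y).PosSemidef := by
  set g : ℝ → ℝ := iteratedDeriv 2 f with hg
  -- derivative of g is iteratedDeriv 3 f
  have hgd : ∀ u, HasDerivAt g (iteratedDeriv 3 f u) u := by
    intro u
    have hdiff : Differentiable ℝ g := by
      have h1 : ContDiff ℝ 1 g := by
        rw [hg, iteratedDeriv_eq_iterate]
        exact hf.iterate_deriv' 1 2
      exact h1.differentiable one_ne_zero
    have : iteratedDeriv 3 f = deriv g := by
      rw [hg, iteratedDeriv_succ]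
    rw [this]
    exact (hdiff u).hasDerivAt
  -- per-coordinate bounds
  have hcoord : ∀ i, |A.mulVec y i - A.mulVec x i| ≤ r := fun i => by
    have := norm_le_pi_norm (A.mulVec x - A.mulVec y) i
    simp only [Pi.sub_apply, Real.norm_eq_abs] at this
    rw [abs_sub_comm]
    exact this.trans hxy
  have hup : ∀ i, g (A.mulVec y i) ≤ g (A.mulVec x i) * Real.exp (C * r) :=
    fun i => qsc_gron hC hr hgd hqsc (hcoord i)
  have hdown : ∀ i, g (A.mulVec x i) ≤ g (A.mulVec y i) * Real.exp (C * r) :=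
    fun i => qsc_gron hC hr hgd hqsc (by rw [abs_sub_comm]; exact hcoord i)
  have hexp : (0:ℝ) < Real.exp (C * r) := Real.exp_pos _
  -- rewrite the matrix differences
  have key : ∀ c : ℝ, (Aᵀ * Matrix.diagonal (fun i => g (A.mulVec y i)) * A)
      - c • (Aᵀ * Matrix.diagonal (fun i => g (A.mulVec x i)) * A)
      = Aᵀ * Matrix.diagonal (fun i => g (A.mulVec y i) - c * g (A.mulVec x i)) * A := by
    intro c
    ext i j
    simp only [Matrix.sub_apply, Matrix.smul_apply, smul_eq_mul, Matrix.mul_apply,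
      Matrix.diagonal_apply, Matrix.transpose_apply, mul_ite, mul_zero, ite_mul, zero_mul,
      Finset.sum_ite_eq, Finset.sum_ite_eq', Finset.mem_univ, if_true, Finset.mul_sum, ← Finset.sum_sub_distrib]
    exact Finset.sum_congr rfl fun k _ => by ring
  have psd : ∀ v : Fin n → ℝ, (∀ i, 0 ≤ v i) →
      (Aᵀ * Matrix.diagonal v * A).PosSemidef := by
    intro v hv
    have hdiag : (Matrix.diagonal v).PosSemidef := Matrix.posSemidef_diagonal_iff.mpr hv
    have := hdiag.conjTranspose_mul_mul_same A
    rwa [Matrix.conjTranspose_eq_transpose_of_trivial] at this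
  constructor
  · rw [hH x, hH y, key]
    refine psd _ fun i => ?_
    rw [sub_nonneg, inv_mul_le_iff₀ hexp, mul_comm]
    exact hdown i
  · rw [hH x, hH y]
    have key2 : Aᵀ * Matrix.diagonal
          (fun i => Real.exp (C * r) * g (A.mulVec x i) - g (A.mulVec y i)) * A
        = Real.exp (C * r) • (Aᵀ * Matrix.diagonal (fun i => g (A.mulVec x i)) * A)
        - (Aᵀ * Matrix.diagonal (fun i => g (A.mulVec y i)) * A) := by
      ext i j
      simp only [Matrix.sub_apply, Matrix.smul_apply, smul_eq_mul, Matrix.mul_apply,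
        Matrix.diagonal_apply, Matrix.transpose_apply, mul_ite, mul_zero, ite_mul, zero_mul,
        Finset.sum_ite_eq, Finset.sum_ite_eq', Finset.mem_univ, if_true, Finset.mul_sum, ← Finset.sum_sub_distrib]
      exact Finset.sum_congr rfl fun k _ => by ring
    rw [← key2]
    refine psd _ fun i => ?_
    rw [sub_nonneg, mul_comm]
    exact hup i
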